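/- Let X be a nonempty compact metric space and μ a finite Borel measure on X with full support (μ(U) > 0 for every nonempty open U ⊆ X). Let u, w : X → ℝ be continuous with min u = 0, max u = l > 0 and min w = 0. For t ∈ [0,1] set h_t := min(t·l, u) + w and g(t) := ∫_X normalize(h_t) dμ, and let t₀ ∈ [0,1] be the unique minimizer of g on [0,1]. Then for every t ∈ [0,1], osc(h_{t₀}) ≤ osc(h_t). -/

import Mathlib

open MeasureTheory Set

/-- The (attained) minimum of `f` on a nonempty compact space. -/
noncomputable def minF {X : Type*} (f : X → ℝ) : ℝ := sInf (Set.range f)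

/-- The (attained) maximum of `f` on a nonempty compact space. -/
noncomputable def maxF {X : Type*} (f : X → ℝ) : ℝ := sSup (Set.range f)

/-- The oscillation `max f - min f`. -/
noncomputable def oscF {X : Type*} (f : X → ℝ) : ℝ := maxF f - minF f

/-- `normalize f = f - min f`. -/
noncomputable def normF {X : Type*} (f : X → ℝ) : X → ℝ := fun x => f x - minF f

/-- The minimizer set of `f`. -/
def argminF {X : Type*} (f : X → ℝ) : Set X := {x | f x = minF f}

/-- The maximizer set of `f`. -/
def argmaxF {X : Type*} (f : X → ℝ) : Set X := {x | f x = maxF f}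

section Helpers

variable {X : Type*} [TopologicalSpace X] [CompactSpace X] [Nonempty X]

theorem minF_le' {f : X → ℝ} (hf : Continuous f) (x : X) : minF f ≤ f x :=
  csInf_le (isCompact_range hf).bddBelow (Set.mem_range_self x)

theorem exists_minF {f : X → ℝ} (hf : Continuous f) : ∃ x, f x = minF f := by
  have := (isCompact_range hf).sInf_mem (Set.range_nonempty f)
  exact this

theorem le_maxF' {f : X → ℝ} (hf : Continuous f) (x : X) : f x ≤ maxF f :=
  le_csSup (isCompact_range hf).bddAbove (Set.mem_range_self x)

theorem exists_maxF {f : X → ℝ} (hf : Continuous f) : ∃ x, f x = maxF f := by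
  have := (isCompact_range hf).sSup_mem (Set.range_nonempty f)
  exact this

end Helpers

theorem cont_integrable' {X : Type*} [MetricSpace X] [CompactSpace X]
    [MeasurableSpace X] [BorelSpace X] (μ : Measure X) [IsFiniteMeasure μ]
    {f : X → ℝ} (hf : Continuous f) : Integrable f μ :=
  hf.integrable_of_hasCompactSupport (isClosed_tsupport f).isCompact

theorem integral_pos_of_exists_pos {X : Type*} [MetricSpace X] [CompactSpace X] [Nonempty X]
    [MeasurableSpace X] [BorelSpace X] (μ : Measure X) [IsFiniteMeasure μ]
    (hfull : ∀ U : Set X, IsOpen U → U.Nonempty → 0 < μ U)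
    {f : X → ℝ} (hf : Continuous f) (h0 : ∀ x, 0 ≤ f x) {x₀ : X} (hx : 0 < f x₀) :
    0 < ∫ x, f x ∂μ := by
  set U : Set X := {x | f x₀ / 2 < f x} with hUdef
  have hUopen : IsOpen U := isOpen_lt continuous_const hf
  have hUne : U.Nonempty := ⟨x₀, by simp only [hUdef, Set.mem_setOf_eq]; linarith⟩
  have hμU : 0 < μ U := hfull U hUopen hUne
  have hμUt : 0 < (μ U).toReal := ENNReal.toReal_pos hμU.ne' (measure_ne_top μ U)
  have hintf : Integrable f μ := cont_integrable' μ hf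
  have h1 : f x₀ / 2 * (μ U).toReal ≤ ∫ x in U, f x ∂μ := by
    apply setIntegral_ge_of_const_le_real hUopen.measurableSet (measure_ne_top μ U)
    · intro x hx'
      exact le_of_lt hx'
    · exact hintf.integrableOn
  have h2 : (∫ x in U, f x ∂μ) ≤ ∫ x, f x ∂μ :=
    setIntegral_le_integral hintf (Filter.Eventually.of_forall h0)
  nlinarith

set_option maxHeartbeats 1600000 in
theorem stmt_16 {X : Type*} [MetricSpace X] [CompactSpace X] [Nonempty X]
    [MeasurableSpace X] [BorelSpace X]
    (μ : Measure X) [IsFiniteMeasure μ]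
    (hfull : ∀ U : Set X, IsOpen U → U.Nonempty → 0 < μ U)
    (u w : X → ℝ) (hu : Continuous u) (hw : Continuous w)
    (l : ℝ) (hl : 0 < l) (humin : minF u = 0) (humax : maxF u = l)
    (hwmin : minF w = 0)
    (t₀ : ℝ) (ht₀ : t₀ ∈ Set.Icc (0:ℝ) 1)
    (ht₀min : ∀ t ∈ Set.Icc (0:ℝ) 1,
      (∫ x, normF (fun x => min (t₀ * l) (u x) + w x) x ∂μ) ≤
        ∫ x, normF (fun x => min (t * l) (u x) + w x) x ∂μ) :
    ∀ t ∈ Set.Icc (0:ℝ) 1,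
      oscF (fun x => min (t₀ * l) (u x) + w x) ≤
        oscF (fun x => min (t * l) (u x) + w x) := by
  classical
  obtain ⟨ht₀0, ht₀1⟩ := ht₀
  set h : ℝ → X → ℝ := fun s x => min (s * l) (u x) + w x with hhdef
  have hcont : ∀ s, Continuous (h s) := fun s => (continuous_const.min hu).add hw
  set m : ℝ → ℝ := fun s => minF (h s) with hmdef
  set M : ℝ → ℝ := fun s => maxF (h s) with hMdef
  -- basic pointwise facts
  have hu_nonneg : ∀ x, 0 ≤ u x := fun x => humin ▸ minF_le' hu x
  have hw_nonneg : ∀ x, 0 ≤ w x := fun x => hwmin ▸ minF_le' hw x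
  have hu_le : ∀ x, u x ≤ l := fun x => humax ▸ le_maxF' hu x
  obtain ⟨x₀, hx₀⟩ := exists_minF hw
  rw [hwmin] at hx₀
  obtain ⟨xu, hxu⟩ := exists_minF hu
  rw [humin] at hxu
  obtain ⟨xM, hxM⟩ := exists_maxF hu
  rw [humax] at hxM
  have hm_le : ∀ s x, m s ≤ h s x := fun s x => minF_le' (hcont s) x
  have hm_att : ∀ s, ∃ x, h s x = m s := fun s => exists_minF (hcont s)
  have hM_ge : ∀ s x, h s x ≤ M s := fun s x => le_maxF' (hcont s) x
  have hM_att : ∀ s, ∃ x, h s x = M s := fun s => exists_maxF (hcont s)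
  set b : ℝ := m 1 with hbdef
  -- pointwise monotonicity and Lipschitz bound
  have hpt_mono : ∀ s t : ℝ, s ≤ t → ∀ x, h s x ≤ h t x := by
    intro s t hst x
    apply add_le_add_left
    exact min_le_min (by nlinarith) le_rfl
  have hpt_lip : ∀ s t : ℝ, s ≤ t → ∀ x, h t x ≤ h s x + l * (t - s) := by
    intro s t hst x
    have : min (t * l) (u x) ≤ min (s * l) (u x) + l * (t - s) := by
      rcases le_total (s * l) (u x) with hc | hc
      · rw [min_eq_left hc]
        calc min (t * l) (u x) ≤ t * l := min_le_left _ _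
          _ = s * l + l * (t - s) := by ring
      · rw [min_eq_right hc]
        have h1 : min (t * l) (u x) ≤ u x := min_le_right _ _
        nlinarith
    simp only [hhdef]
    linarith
  have hb0 : 0 ≤ b := by
    obtain ⟨x, hx⟩ := hm_att 1
    rw [hbdef, ← hx]
    have h1 := hu_nonneg x
    have h2 := hw_nonneg x
    have h3 : (0:ℝ) ≤ min (1 * l) (u x) := le_min (by linarith) h1
    simp only [hhdef]
    linarith
  -- formula for m
  have hm_formula : ∀ s : ℝ, 0 ≤ s → s ≤ 1 → m s = min (s * l) b := by
    intro s hs0 hs1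
    apply le_antisymm
    · apply le_min
      · calc m s ≤ h s x₀ := hm_le s x₀
          _ = min (s * l) (u x₀) + 0 := by simp only [hhdef]; rw [hx₀]
          _ ≤ s * l := by simpa using min_le_left (s * l) (u x₀)
      · obtain ⟨x, hx⟩ := hm_att 1
        calc m s ≤ h s x := hm_le s x
          _ ≤ h 1 x := hpt_mono s 1 hs1 x
          _ = b := hx
    · obtain ⟨x, hx⟩ := hm_att s
      rw [← hx]
      rcases le_total (s * l) (u x) with hc | hc
      · calc min (s * l) b ≤ s * l := min_le_left _ _
          _ ≤ h s x := by
              simp only [hhdef]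
              rw [min_eq_left hc]
              linarith [hw_nonneg x]
      · have h1 : u x ≤ 1 * l := by rw [one_mul]; exact hu_le x
        calc min (s * l) b ≤ b := min_le_right _ _
          _ ≤ h 1 x := hm_le 1 x
          _ = h s x := by simp only [hhdef]; rw [min_eq_right hc, min_eq_right h1]
  -- M monotone and Lipschitz
  have hM_mono : ∀ s t : ℝ, s ≤ t → M s ≤ M t := by
    intro s t hst
    obtain ⟨x, hx⟩ := hM_att s
    calc M s = h s x := hx.symm
      _ ≤ h t x := hpt_mono s t hst x
      _ ≤ M t := hM_ge t x
  have hM_lip : ∀ s t : ℝ, s ≤ t → M t ≤ M s + l * (t - s) := by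
    intro s t hst
    obtain ⟨x, hx⟩ := hM_att t
    calc M t = h t x := hx.symm
      _ ≤ h s x + l * (t - s) := hpt_lip s t hst x
      _ ≤ M s + l * (t - s) := by linarith [hM_ge s x]
  -- integrals
  have hint : ∀ s, Integrable (h s) μ := fun s => cont_integrable' μ (hcont s)
  have hg : ∀ s, (∫ x, normF (h s) x ∂μ)
      = (∫ x, h s x ∂μ) - (μ Set.univ).toReal * m s := by
    intro s
    have e : (∫ x, normF (h s) x ∂μ) = ∫ x, (h s x - m s) ∂μ := rfl
    rw [e, integral_sub (hint s) (integrable_const _), integral_const, smul_eq_mul, Measure.real_def]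
  -- the candidate minimizer
  set ts : ℝ := min (b / l) 1 with htsdef
  have hts0 : 0 ≤ ts := le_min (div_nonneg hb0 hl.le) zero_le_one
  have hts1 : ts ≤ 1 := min_le_right _ _
  have hts_le : ts * l ≤ b := by
    have : ts ≤ b / l := min_le_left _ _
    calc ts * l ≤ (b / l) * l := by nlinarith
      _ = b := div_mul_cancel₀ b hl.ne'
  have hmts : m ts = ts * l := by
    rw [hm_formula ts hts0 hts1]
    exact min_eq_left hts_le
  -- t₀ = ts
  have hkey : t₀ = ts := by
    by_contra hne
    have hle := ht₀min ts ⟨hts0, hts1⟩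
    have hle' : (∫ x, h t₀ x ∂μ) - (μ Set.univ).toReal * m t₀
        ≤ (∫ x, h ts x ∂μ) - (μ Set.univ).toReal * m ts := by
      rw [← hg t₀, ← hg ts]
      exact hle
    rcases lt_or_gt_of_ne hne with hlt | hgt
    · -- t₀ < ts : g strictly decreasing up to ts
      have hmt₀ : m t₀ = t₀ * l := by
        rw [hm_formula t₀ ht₀0 ht₀1]
        exact min_eq_left (by nlinarith)
      have hfpos : 0 < ∫ x, (l * (ts - t₀) - (h ts x - h t₀ x)) ∂μ := by
        apply integral_pos_of_exists_pos μ hfull (x₀ := xu)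
        · exact (continuous_const.sub ((hcont ts).sub (hcont t₀)))
        · intro x
          have := hpt_lip t₀ ts hlt.le x
          linarith
        · have e1 : h ts xu = w xu := by
            simp only [hhdef, hxu]
            rw [min_eq_right (mul_nonneg hts0 hl.le), zero_add]
          have e2 : h t₀ xu = w xu := by
            simp only [hhdef, hxu]
            rw [min_eq_right (mul_nonneg ht₀0 hl.le), zero_add]
          rw [e1, e2]
          nlinarith
      have e1 : (∫ x, (l * (ts - t₀) - (h ts x - h t₀ x)) ∂μ)
          = (∫ _x, (l * (ts - t₀) : ℝ) ∂μ) - ∫ x, (h ts x - h t₀ x) ∂μ :=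
        integral_sub (integrable_const _) ((hint ts).sub (hint t₀))
      have e2 : (∫ x, (h ts x - h t₀ x) ∂μ)
          = (∫ x, h ts x ∂μ) - ∫ x, h t₀ x ∂μ := integral_sub (hint ts) (hint t₀)
      have e3 : (∫ _x, (l * (ts - t₀) : ℝ) ∂μ) = (μ Set.univ).toReal * (l * (ts - t₀)) := by
        rw [integral_const, smul_eq_mul]
        rfl
      rw [e1, e2, e3] at hfpos
      rw [hmt₀, hmts] at hle'
      nlinarith
    · -- ts < t₀ : g strictly increasing after ts
      have hts_lt1 : ts < 1 := lt_of_lt_of_le hgt ht₀1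
      have hbl : b / l < 1 := by
        by_contra hcon
        push_neg at hcon
        have : ts = 1 := by rw [htsdef, min_eq_right hcon]
        linarith
      have hts_eq : ts * l = b := by
        rw [htsdef, min_eq_left hbl.le, div_mul_cancel₀ b hl.ne']
      have hmt₀ : m t₀ = b := by
        rw [hm_formula t₀ ht₀0 ht₀1]
        refine min_eq_right ?_
        rw [← hts_eq]
        nlinarith
      have hfpos : 0 < ∫ x, (h t₀ x - h ts x) ∂μ := by
        apply integral_pos_of_exists_pos μ hfull (x₀ := xM)
        · exact (hcont t₀).sub (hcont ts)
        · intro x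
          exact sub_nonneg.mpr (hpt_mono ts t₀ hgt.le x)
        · have e1 : h t₀ xM = t₀ * l + w xM := by
            simp only [hhdef, hxM]
            rw [min_eq_left (mul_le_of_le_one_left hl.le ht₀1)]
          have e2 : h ts xM = ts * l + w xM := by
            simp only [hhdef, hxM]
            rw [min_eq_left (mul_le_of_le_one_left hl.le hts1)]
          rw [e1, e2]
          nlinarith
      have hcalc : (∫ x, (h t₀ x - h ts x) ∂μ)
          = (∫ x, h t₀ x ∂μ) - (∫ x, h ts x ∂μ) :=
        integral_sub (hint t₀) (hint ts)
      rw [hcalc] at hfpos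
      rw [hmt₀, hmts, hts_eq] at hle'
      linarith
  -- conclusion
  intro t ht
  obtain ⟨ht0, ht1⟩ := ht
  show M t₀ - m t₀ ≤ M t - m t
  rw [hkey, hmts]
  rcases le_total t ts with hc | hc
  · have hmt : m t = t * l := by
      rw [hm_formula t ht0 ht1]
      exact min_eq_left (by nlinarith)
    have := hM_lip t ts hc
    rw [hmt]
    linarith
  · rcases hc.eq_or_lt with heq | hlt2
    · rw [← heq, hmts]
    · have hts_lt1 : ts < 1 := lt_of_lt_of_le hlt2 ht1
      have hbl : b / l < 1 := by
        by_contra hcon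
        push_neg at hcon
        have : ts = 1 := by rw [htsdef, min_eq_right hcon]
        linarith
      have hts_eq : ts * l = b := by
        rw [htsdef, min_eq_left hbl.le, div_mul_cancel₀ b hl.ne']
      have hmt : m t = b := by
        rw [hm_formula t ht0 ht1]
        refine min_eq_right ?_
        rw [← hts_eq]
        nlinarith
      have := hM_mono ts t hlt2.le
      rw [hmt, hts_eq]
      linarith
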